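/- Let E be a Banach space over 𝕜, let 𝒜 be a standard subalgebra of B(E), and let B ∈ 𝒜. Define B⊥ = {A ∈ 𝒜 : A ≠ 0 and A ∘ B = 0}. Then B⊥ is nonempty and every element of B⊥ has rank one if and only if the closure of the range of B is a closed subspace of codimension one in E. -/

import Mathlib

set_option synthInstance.maxHeartbeats 400000
set_option maxHeartbeats 1000000

/-- A subalgebra of `B(E)` is *standard* if it contains every continuous finite-rank
operator (it contains the identity automatically, being a subalgebra). -/
def IsStandardSubalgebra (𝕜 : Type*) [RCLike 𝕜] {E : Type*} [NormedAddCommGroup E]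
    [NormedSpace 𝕜 E] (𝒜 : Subalgebra 𝕜 (E →L[𝕜] E)) : Prop :=
  ∀ A : E →L[𝕜] E, FiniteDimensional 𝕜 (LinearMap.range (A : E →ₗ[𝕜] E)) → A ∈ 𝒜

open Module Submodule

section Aux

variable {𝕜 : Type*} [RCLike 𝕜] {E : Type*} [NormedAddCommGroup E] [NormedSpace 𝕜 E]

/-- Hahn–Banach: a continuous functional vanishing on a closed submodule and nonzero
at a given point outside it. -/
lemma exists_functional_vanishing (p : Submodule 𝕜 E) (hp : IsClosed (p : Set E)) {x : E}
    (hx : x ∉ p) : ∃ g : E →L[𝕜] 𝕜, (∀ y ∈ p, g y = 0) ∧ g x ≠ 0 := by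
  haveI := hp
  let π : E →L[𝕜] E ⧸ p :=
    LinearMap.mkContinuous p.mkQ 1 (fun m => by
      simpa using Submodule.Quotient.norm_mk_le p m)
  have hπ : ∀ y : E, π y = Submodule.Quotient.mk y := fun y => rfl
  have hπx : π x ≠ 0 := by
    rw [hπ, ne_eq, Submodule.Quotient.mk_eq_zero]
    exact hx
  obtain ⟨φ, -, hφx⟩ := exists_dual_vector 𝕜 (π x) (norm_ne_zero_iff.mpr hπx)
  refine ⟨φ.comp π, fun y hy => ?_, ?_⟩
  · have h0 : π y = 0 := by rw [hπ, Submodule.Quotient.mk_eq_zero]; exact hy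
    simp [h0]
  · simp only [ContinuousLinearMap.comp_apply, hφx]
    exact_mod_cast RCLike.ofReal_ne_zero.mpr (norm_ne_zero_iff.mpr hπx)

/-- If the quotient by `p` is one-dimensional, any nonzero operator annihilating `p`
has rank one. -/
lemma finrank_range_eq_one_of_quot {p : Submodule 𝕜 E} (hp : finrank 𝕜 (E ⧸ p) = 1)
    {A : E →L[𝕜] E} (hA : A ≠ 0) (hker : p ≤ LinearMap.ker (A : E →ₗ[𝕜] E)) :
    finrank 𝕜 (LinearMap.range ((A : E →L[𝕜] E) : E →ₗ[𝕜] E)) = 1 := by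
  haveI : FiniteDimensional 𝕜 (E ⧸ p) := FiniteDimensional.of_finrank_pos (by omega)
  set A' := ((A : E →L[𝕜] E) : E →ₗ[𝕜] E) with hA'
  have hker' : p ≤ LinearMap.ker A' := hker
  let φ : (E ⧸ p) →ₗ[𝕜] E ⧸ LinearMap.ker A' :=
    p.liftQ (LinearMap.ker A').mkQ (by rwa [Submodule.ker_mkQ])
  have hφ : Function.Surjective φ := by
    intro y
    obtain ⟨x, rfl⟩ := Submodule.mkQ_surjective _ y
    exact ⟨Submodule.Quotient.mk x, rfl⟩
  haveI : FiniteDimensional 𝕜 (E ⧸ LinearMap.ker A') := Module.Finite.of_surjective φ hφ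
  have e : (E ⧸ LinearMap.ker A') ≃ₗ[𝕜] LinearMap.range A' := A'.quotKerEquivRange
  haveI : FiniteDimensional 𝕜 (LinearMap.range A') := Module.Finite.equiv e
  have h1 : finrank 𝕜 (LinearMap.range A') ≤ 1 := by
    rw [← e.finrank_eq]
    have hle := LinearMap.finrank_range_le φ
    rw [LinearMap.range_eq_top.mpr hφ, finrank_top, hp] at hle
    exact hle
  have hnt : Nontrivial (LinearMap.range A') := by
    rw [Submodule.nontrivial_iff_ne_bot, ne_eq, LinearMap.range_eq_bot]
    intro h0
    exact hA (by ext x; exact congrFun (congrArg DFunLike.coe h0) x)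
  have := Module.finrank_pos (R := 𝕜) (M := LinearMap.range A')
  omega

end Aux

theorem annihilator_rank_one_iff_range_codimension_one
    {𝕜 : Type*} [RCLike 𝕜]
    {E : Type*} [NormedAddCommGroup E] [NormedSpace 𝕜 E] [CompleteSpace E]
    (𝒜 : Subalgebra 𝕜 (E →L[𝕜] E)) (h𝒜 : IsStandardSubalgebra 𝕜 𝒜) (B : 𝒜) :
    (((({A : 𝒜 | A ≠ 0 ∧ A * B = 0}).Nonempty) ∧
        ∀ A : 𝒜, A ≠ 0 ∧ A * B = 0 →
          Module.finrank 𝕜 (LinearMap.range ((A : E →L[𝕜] E) : E →ₗ[𝕜] E)) = 1)) ↔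
      Module.finrank 𝕜
        (E ⧸ (LinearMap.range ((B : E →L[𝕜] E) : E →ₗ[𝕜] E)).topologicalClosure) = 1 := by
  set R := (LinearMap.range ((B : E →L[𝕜] E) : E →ₗ[𝕜] E)).topologicalClosure with hR
  have hRclosed : IsClosed (R : Set E) := Submodule.isClosed_topologicalClosure _
  -- basic fact: if A * B = 0 then R ≤ ker A
  have key : ∀ A : 𝒜, A * B = 0 → R ≤ LinearMap.ker ((A : E →L[𝕜] E) : E →ₗ[𝕜] E) := by
    intro A hAB
    have hAB' : (A : E →L[𝕜] E) * (B : E →L[𝕜] E) = 0 := by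
      exact_mod_cast congrArg Subtype.val hAB
    refine Submodule.topologicalClosure_minimal _ ?_ (ContinuousLinearMap.isClosed_ker (A : E →L[𝕜] E))
    rintro _ ⟨x, rfl⟩
    have := congrFun (congrArg DFunLike.coe hAB') x
    simpa using this
  -- vanishing of functionals on R composed with B
  have keyf : ∀ g : E →L[𝕜] 𝕜, (∀ y ∈ R, g y = 0) → ∀ x : E, g ((B : E →L[𝕜] E) x) = 0 := by
    intro g hg x
    exact hg _ (Submodule.le_topologicalClosure _ (LinearMap.mem_range_self _ x))
  constructor
  · rintro ⟨⟨A₀, hA₀ne, hA₀B⟩, hall⟩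
    -- build a nonzero functional vanishing on R
    have hA₀ne' : (A₀ : E →L[𝕜] E) ≠ 0 := by
      intro h; exact hA₀ne (Subtype.ext h)
    obtain ⟨x₀, hx₀⟩ : ∃ x, (A₀ : E →L[𝕜] E) x ≠ 0 := by
      by_contra h
      push_neg at h
      exact hA₀ne' (by ext x; simpa using h x)
    obtain ⟨ψ, -, hψ⟩ := exists_dual_vector 𝕜 _ (norm_ne_zero_iff.mpr hx₀)
    set f : E →L[𝕜] 𝕜 := ψ.comp (A₀ : E →L[𝕜] E) with hf
    have hfx₀ : f x₀ ≠ 0 := by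
      rw [hf]
      simp only [ContinuousLinearMap.comp_apply, hψ]
      exact_mod_cast RCLike.ofReal_ne_zero.mpr (norm_ne_zero_iff.mpr hx₀)
    have hfR : ∀ y ∈ R, f y = 0 := by
      intro y hy
      have := key A₀ hA₀B hy
      simp only [LinearMap.mem_ker] at this
      simp [hf, ContinuousLinearMap.comp_apply]
      rw [show (A₀ : E →L[𝕜] E) y = 0 from this]
      simp
    -- case split on whether ker f = R
    by_cases hkf : ∀ w : E, f w = 0 → w ∈ R
    · -- then R = ker f and E ⧸ R ≃ 𝕜
      have hReq : R = LinearMap.ker ((f : E →L[𝕜] 𝕜) : E →ₗ[𝕜] 𝕜) := by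
        apply le_antisymm
        · intro y hy; exact hfR y hy
        · intro w hw; exact hkf w hw
      rw [hReq]
      have hsurj : Function.Surjective ((f : E →L[𝕜] 𝕜) : E →ₗ[𝕜] 𝕜) := by
        intro c
        refine ⟨(c / f x₀) • x₀, ?_⟩
        simp only [LinearMap.map_smul]
        rw [show ((f : E →L[𝕜] 𝕜) : E →ₗ[𝕜] 𝕜) x₀ = f x₀ from rfl]
        field_simp
        rw [smul_eq_mul, div_mul_cancel₀ c hfx₀]
      have e := ((f : E →L[𝕜] 𝕜) : E →ₗ[𝕜] 𝕜).quotKerEquivOfSurjective hsurj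
      rw [e.finrank_eq, finrank_self]
    · push_neg at hkf
      obtain ⟨w, hfw, hwR⟩ := hkf
      obtain ⟨g, hgR, hgw⟩ := exists_functional_vanishing R hRclosed hwR
      -- the rank-two operator
      set A : E →L[𝕜] E := f.smulRight x₀ + g.smulRight w with hAdef
      have hAapp : ∀ x, A x = f x • x₀ + g x • w := fun x => rfl
      have hw0 : w ≠ 0 := fun h => hgw (by simp [h])
      have hrange_le : LinearMap.range (A : E →ₗ[𝕜] E) ≤ Submodule.span 𝕜 {x₀, w} := by
        rintro _ ⟨x, rfl⟩
        rw [show (A : E →ₗ[𝕜] E) x = f x • x₀ + g x • w from rfl]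
        exact Submodule.add_mem _
          (Submodule.smul_mem _ _ (Submodule.subset_span (by simp)))
          (Submodule.smul_mem _ _ (Submodule.subset_span (by simp)))
      haveI hspanfd : FiniteDimensional 𝕜 (Submodule.span 𝕜 ({x₀, w} : Set E)) :=
        FiniteDimensional.span_of_finite 𝕜 (Set.toFinite _)
      haveI : FiniteDimensional 𝕜 (LinearMap.range (A : E →ₗ[𝕜] E)) :=
        Submodule.finiteDimensional_of_le hrange_le
      have hAmem : A ∈ 𝒜 := h𝒜 A inferInstance
      -- membership in the annihilator set
      have hAne : (⟨A, hAmem⟩ : 𝒜) ≠ 0 := by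
        intro h
        have : A = 0 := congrArg Subtype.val h
        have hw' : A w = 0 := by rw [this]; rfl
        rw [hAapp, hfw, zero_smul, zero_add] at hw'
        exact hgw (by simpa [smul_eq_zero, hw0] using hw')
      have hAB : (⟨A, hAmem⟩ : 𝒜) * B = 0 := by
        apply Subtype.ext
        show A * (B : E →L[𝕜] E) = 0
        ext x
        show A ((B : E →L[𝕜] E) x) = 0
        rw [hAapp]
        rw [keyf f hfR x, keyf g hgR x]
        simp
      have h1 := hall ⟨A, hAmem⟩ ⟨hAne, hAB⟩
      -- but the range of A contains the independent pair x₀, w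
      exfalso
      have hwmem : w ∈ LinearMap.range (A : E →ₗ[𝕜] E) := by
        refine ⟨(g w)⁻¹ • w, ?_⟩
        rw [show (A : E →ₗ[𝕜] E) ((g w)⁻¹ • w) = A ((g w)⁻¹ • w) from rfl, map_smul, hAapp,
          hfw, zero_smul, zero_add, smul_smul, inv_mul_cancel₀ hgw, one_smul]
      have hx₀mem : x₀ ∈ LinearMap.range (A : E →ₗ[𝕜] E) := by
        have hmem : A ((f x₀)⁻¹ • x₀) ∈ LinearMap.range (A : E →ₗ[𝕜] E) :=
          ⟨(f x₀)⁻¹ • x₀, rfl⟩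
        have hx : A ((f x₀)⁻¹ • x₀) = x₀ + ((f x₀)⁻¹ * g x₀) • w := by
          rw [map_smul, hAapp, smul_add, smul_smul, inv_mul_cancel₀ hfx₀, one_smul, smul_smul]
        have := Submodule.sub_mem _ hmem
          (Submodule.smul_mem _ ((f x₀)⁻¹ * g x₀) hwmem)
        rwa [hx, add_sub_cancel_right] at this
      have hspan_le : Submodule.span 𝕜 ({x₀, w} : Set E) ≤ LinearMap.range (A : E →ₗ[𝕜] E) :=
        Submodule.span_le.mpr (by rintro y (rfl | rfl) <;> assumption)
      have hEq : LinearMap.range (A : E →ₗ[𝕜] E) = Submodule.span 𝕜 ({x₀, w} : Set E) :=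
        le_antisymm hrange_le hspan_le
      -- x₀ and w are linearly independent
      have hind : LinearIndependent 𝕜 ![x₀, w] := by
        rw [LinearIndependent.pair_iff]
        intro a b hab
        have h1 : f (a • x₀ + b • w) = 0 := by rw [hab]; simp
        rw [map_add, map_smul, map_smul, hfw, smul_eq_mul, smul_eq_mul, mul_zero, add_zero]
          at h1
        have ha : a = 0 := by
          rcases mul_eq_zero.mp h1 with h | h
          · exact h
          · exact absurd h hfx₀
        subst ha
        rw [zero_smul, zero_add] at hab
        rcases smul_eq_zero.mp hab with h | h
        · exact ⟨rfl, h⟩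
        · exact absurd h hw0
      have h2 : finrank 𝕜 (Submodule.span 𝕜 ({x₀, w} : Set E)) = 2 := by
        have := finrank_span_eq_card (R := 𝕜) hind
        rw [show Set.range ![x₀, w] = {x₀, w} from Matrix.range_cons_cons_empty x₀ w _] at this
        simpa using this
      rw [hEq, h2] at h1
      omega
  · intro hcod
    haveI : FiniteDimensional 𝕜 (E ⧸ R) := FiniteDimensional.of_finrank_pos (by omega)
    have hRneTop : R ≠ ⊤ := by
      intro h
      rw [h] at hcod
      haveI : Subsingleton (E ⧸ (⊤ : Submodule 𝕜 E)) :=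
        Submodule.Quotient.subsingleton_iff.mpr rfl
      rw [finrank_zero_of_subsingleton] at hcod
      omega
    obtain ⟨x₀, hx₀R⟩ : ∃ x, x ∉ R := by
      by_contra h
      push_neg at h
      exact hRneTop (Submodule.eq_top_iff'.mpr h)
    obtain ⟨g, hgR, hgx₀⟩ := exists_functional_vanishing R hRclosed hx₀R
    set A : E →L[𝕜] E := g.smulRight x₀ with hAdef
    have hAapp : ∀ x, A x = g x • x₀ := fun x => rfl
    have hx₀0 : x₀ ≠ 0 := fun h => hx₀R (h ▸ R.zero_mem)
    have hrange_le : LinearMap.range (A : E →ₗ[𝕜] E) ≤ Submodule.span 𝕜 {x₀} := by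
      rintro _ ⟨x, rfl⟩
      rw [show (A : E →ₗ[𝕜] E) x = g x • x₀ from rfl]
      exact Submodule.smul_mem _ _ (Submodule.subset_span (by simp))
    haveI : FiniteDimensional 𝕜 (Submodule.span 𝕜 ({x₀} : Set E)) :=
      FiniteDimensional.span_of_finite 𝕜 (Set.finite_singleton _)
    haveI : FiniteDimensional 𝕜 (LinearMap.range (A : E →ₗ[𝕜] E)) :=
      Submodule.finiteDimensional_of_le hrange_le
    have hAmem : A ∈ 𝒜 := h𝒜 A inferInstance
    have hAne : (⟨A, hAmem⟩ : 𝒜) ≠ 0 := by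
      intro h
      have : A = 0 := congrArg Subtype.val h
      have hx' : A x₀ = 0 := by rw [this]; rfl
      rw [hAapp] at hx'
      rcases smul_eq_zero.mp hx' with h' | h'
      · exact hgx₀ h'
      · exact hx₀0 h'
    have hAB : (⟨A, hAmem⟩ : 𝒜) * B = 0 := by
      apply Subtype.ext
      show A * (B : E →L[𝕜] E) = 0
      ext x
      show A ((B : E →L[𝕜] E) x) = 0
      rw [hAapp, keyf g hgR x, zero_smul]
    refine ⟨⟨⟨A, hAmem⟩, hAne, hAB⟩, ?_⟩
    rintro C ⟨hCne, hCB⟩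
    have hCne' : (C : E →L[𝕜] E) ≠ 0 := fun h => hCne (Subtype.ext h)
    exact finrank_range_eq_one_of_quot hcod hCne' (key C hCB)
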